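/- Let f be entire and non-constant, φ(z) = cz + b with c ≠ 1 and f ∘ φ = f. Then c is a root of unity. -/

import Mathlib

/-- Iterated derivative of `f (c*z+b)`. -/
lemma iteratedDeriv_comp_affine (f : ℂ → ℂ) (hf : Differentiable ℂ f) (c b : ℂ) (n : ℕ) :
    iteratedDeriv n (fun z => f (c * z + b)) = fun z => c ^ n * iteratedDeriv n f (c * z + b) := by
  have hA : AnalyticOnNhd ℂ f Set.univ := Complex.analyticOnNhd_univ_iff_differentiable.mpr hf
  have hAn : ∀ m, AnalyticOnNhd ℂ (iteratedDeriv m f) Set.univ := by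
    intro m
    induction m with
    | zero => simpa [iteratedDeriv_zero] using hA
    | succ m IH => rw [iteratedDeriv_succ]; exact IH.deriv
  induction n with
  | zero => simp
  | succ n IH =>
    rw [iteratedDeriv_succ, IH]
    funext z
    have hd : DifferentiableAt ℂ (iteratedDeriv n f) (c * z + b) :=
      ((hAn n) _ (Set.mem_univ _)).differentiableAt
    have h1 : HasDerivAt (fun z => iteratedDeriv n f (c * z + b))
        (iteratedDeriv (n + 1) f (c * z + b) * c) z := by
      have := hd.hasDerivAt.comp z (((hasDerivAt_id z).const_mul c).add_const b)
      simpa [iteratedDeriv_succ, mul_comm, Function.comp_def] using this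
    have h2 : HasDerivAt (fun z => c ^ n * iteratedDeriv n f (c * z + b))
        (c ^ n * (iteratedDeriv (n + 1) f (c * z + b) * c)) z := h1.const_mul _
    rw [h2.deriv]; ring

/-- If `φ z = c z + b` with `c ≠ 0`, `c ≠ 1` is automorphic for a non-constant
entire `f`, then `c` is a root of unity. -/
theorem stmt10 (f : ℂ → ℂ) (hf : Differentiable ℂ f)
    (hnc : ¬ ∃ C : ℂ, ∀ w, f w = C)
    (c b : ℂ) (hc0 : c ≠ 0) (hc : c ≠ 1)
    (haut : ∀ z : ℂ, f (c * z + b) = f z) :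
    ∃ n : ℕ, 1 ≤ n ∧ c ^ n = 1 := by
  set z₀ : ℂ := b / (1 - c) with hz₀
  have h1c : (1 : ℂ) - c ≠ 0 := sub_ne_zero.mpr (Ne.symm hc)
  have hfix : c * z₀ + b = z₀ := by
    rw [hz₀]
    field_simp
    ring
  have hex : ∃ n : ℕ, 1 ≤ n ∧ iteratedDeriv n f z₀ ≠ 0 := by
    by_contra h
    push_neg at h
    apply hnc
    refine ⟨f z₀, fun w => ?_⟩
    have ht := Complex.taylorSeries_eq_of_entire' z₀ w hf
    rw [← ht, tsum_eq_single 0]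
    · simp
    · intro n hn
      rw [h n (Nat.one_le_iff_ne_zero.mpr hn)]
      ring
  obtain ⟨n, hn1, hnz⟩ := hex
  refine ⟨n, hn1, ?_⟩
  have key := iteratedDeriv_comp_affine f hf c b n
  have h1 : (fun z => f (c * z + b)) = f := funext haut
  rw [h1] at key
  have h2 := congrFun key z₀
  rw [hfix] at h2
  have h3 : (c ^ n - 1) * iteratedDeriv n f z₀ = 0 := by
    rw [sub_mul, ← h2]; ring
  rcases mul_eq_zero.mp h3 with h | h
  · exact sub_eq_zero.mp h
  · exact absurd h hnz
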